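/- There is no g ∈ GL(3,ℂ) whose induced projective transformation of ℙ²(ℂ) maps each line of 𝒞⁺ onto the correspondingly labeled line of 𝒞⁻, i.e., maps M_i of 𝒞⁺ onto M_i of 𝒞⁻ and L_i of 𝒞⁺ onto L_i of 𝒞⁻ for all i = 1,…,5. (In particular, the ordered arrangements 𝒞⁺ and 𝒞⁻ define two distinct points of the ordered moduli space.) -/

import Mathlib

open scoped LinearAlgebra.Projectivization

/-- The complex projective plane `ℙ²(ℂ)`, the projectivization of `ℂ³`. -/
abbrev Pt := ℙ ℂ (Fin 3 → ℂ)

/-- The projective line `{[x:y:z] | a·x + b·y + c·z = 0}` in `ℙ²(ℂ)` determined by the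
linear form with coefficients `(a, b, c)`.  (Vanishing of a linear form is independent
of the choice of homogeneous coordinates, so testing it on `p.rep` is equivalent to
testing it on any representative.) -/
def pline (a b c : ℂ) : Set Pt :=
  {p | a * p.rep 0 + b * p.rep 1 + c * p.rep 2 = 0}

/-- The lines `M₁,…,M₅` of the arrangement `𝒞_γ` (0-based: `Mline γ i = M_{i+1}`):
`M₁: z=0`, `M₂: x=0`, `M₃: x=z`, `M₄: x=−(γ+1)z`, `M₅: x=(γ+2)z`. -/
noncomputable def Mline (γ : ℝ) : Fin 5 → Set Pt :=
  ![pline 0 0 1, pline 1 0 0, pline 1 0 (-1),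
    pline 1 0 ((γ : ℂ) + 1), pline 1 0 (-((γ : ℂ) + 2))]

/-- The lines `L₁,…,L₅` of the arrangement `𝒞_γ` (0-based: `Lline γ i = L_{i+1}`):
`L₁: y=x`, `L₂: y=γ(x−z)`, `L₃: y=γx+z`, `L₄: y=z`, `L₅: y=0`. -/
noncomputable def Lline (γ : ℝ) : Fin 5 → Set Pt :=
  ![pline 1 (-1) 0, pline (γ : ℂ) (-1) (-(γ : ℂ)), pline (γ : ℂ) (-1) 1,
    pline 0 1 (-1), pline 0 1 0]

/-- `γ⁺ = (−1+√5)/2`. -/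
noncomputable def γplus : ℝ := (-1 + Real.sqrt 5) / 2

/-- `γ⁻ = (−1−√5)/2`. -/
noncomputable def γminus : ℝ := (-1 - Real.sqrt 5) / 2

lemma mem_pline_mk (a b c : ℂ) (v : Fin 3 → ℂ) (hv : v ≠ 0) :
    Projectivization.mk ℂ v hv ∈ pline a b c ↔ a * v 0 + b * v 1 + c * v 2 = 0 := by
  obtain ⟨t, ht⟩ := Projectivization.exists_smul_eq_mk_rep ℂ v hv
  have h0 := congrFun ht 0
  have h1 := congrFun ht 1
  have h2 := congrFun ht 2
  simp only [Pi.smul_apply, Units.smul_def, smul_eq_mul] at h0 h1 h2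
  have : a * (Projectivization.mk ℂ v hv).rep 0 + b * (Projectivization.mk ℂ v hv).rep 1
      + c * (Projectivization.mk ℂ v hv).rep 2
      = (t : ℂ) * (a * v 0 + b * v 1 + c * v 2) := by
    rw [← h0, ← h1, ← h2]; ring
  rw [pline, Set.mem_setOf_eq, this, mul_eq_zero]
  simp [t.ne_zero]

lemma forward (g : (Fin 3 → ℂ) ≃ₗ[ℂ] (Fin 3 → ℂ))
    {a b c a' b' c' : ℂ}
    (h : Projectivization.map (g : (Fin 3 → ℂ) →ₗ[ℂ] (Fin 3 → ℂ)) g.injective ''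
      pline a b c = pline a' b' c')
    (v : Fin 3 → ℂ) (hv : v ≠ 0) (hform : a * v 0 + b * v 1 + c * v 2 = 0) :
    a' * g v 0 + b' * g v 1 + c' * g v 2 = 0 := by
  have hmem : Projectivization.mk ℂ v hv ∈ pline a b c := (mem_pline_mk a b c v hv).mpr hform
  have himg : Projectivization.map (g : (Fin 3 → ℂ) →ₗ[ℂ] (Fin 3 → ℂ)) g.injective
      (Projectivization.mk ℂ v hv) ∈ pline a' b' c' := by
    rw [← h]; exact ⟨_, hmem, rfl⟩
  rw [Projectivization.map_mk] at himg
  exact (mem_pline_mk a' b' c' _ _).mp himg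

/-- There is no invertible linear map `g` of `ℂ³` whose induced projective
transformation of `ℙ²(ℂ)` maps each line of `𝒞⁺ = 𝒞_{γ⁺}` onto the correspondingly
labeled line of `𝒞⁻ = 𝒞_{γ⁻}` (i.e. `M_i ↦ M_i` and `L_i ↦ L_i` for all `i`); so the
ordered arrangements `𝒞⁺` and `𝒞⁻` give two distinct points of the ordered moduli
space. -/
theorem stmt_12 :
    ¬ ∃ g : (Fin 3 → ℂ) ≃ₗ[ℂ] (Fin 3 → ℂ),
      (∀ i : Fin 5, Projectivization.map (g : (Fin 3 → ℂ) →ₗ[ℂ] (Fin 3 → ℂ)) g.injective ''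
        Mline γplus i = Mline γminus i) ∧
      (∀ i : Fin 5, Projectivization.map (g : (Fin 3 → ℂ) →ₗ[ℂ] (Fin 3 → ℂ)) g.injective ''
        Lline γplus i = Lline γminus i) := by
  rintro ⟨g, hM, hL⟩
  set e0 : Fin 3 → ℂ := ![1, 0, 0] with he0
  set e2 : Fin 3 → ℂ := ![0, 0, 1] with he2
  have he0ne : e0 ≠ 0 := fun h => by simpa [he0] using congrFun h 0
  have he2ne : e2 ≠ 0 := fun h => by simpa [he2] using congrFun h 2
  have hM0 : Projectivization.map (g : (Fin 3 → ℂ) →ₗ[ℂ] (Fin 3 → ℂ)) g.injective ''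
      pline 0 0 1 = pline 0 0 1 := by simpa [Mline] using hM 0
  have hM1 : Projectivization.map (g : (Fin 3 → ℂ) →ₗ[ℂ] (Fin 3 → ℂ)) g.injective ''
      pline 1 0 0 = pline 1 0 0 := by simpa [Mline] using hM 1
  have hM2 : Projectivization.map (g : (Fin 3 → ℂ) →ₗ[ℂ] (Fin 3 → ℂ)) g.injective ''
      pline 1 0 (-1) = pline 1 0 (-1) := by simpa [Mline] using hM 2
  have hM3 : Projectivization.map (g : (Fin 3 → ℂ) →ₗ[ℂ] (Fin 3 → ℂ)) g.injective ''
      pline 1 0 ((γplus : ℂ) + 1) = pline 1 0 ((γminus : ℂ) + 1) := by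
    simpa [Mline] using hM 3
  have hL4 : Projectivization.map (g : (Fin 3 → ℂ) →ₗ[ℂ] (Fin 3 → ℂ)) g.injective ''
      pline 0 1 0 = pline 0 1 0 := by simpa [Lline] using hL 4
  -- A := g e0, B := g e2
  have hA2 : g e0 2 = 0 := by
    have := forward g hM0 e0 he0ne (by simp [he0])
    simpa using this
  have hA1 : g e0 1 = 0 := by
    have := forward g hL4 e0 he0ne (by simp [he0])
    simpa using this
  have hB0 : g e2 0 = 0 := by
    have := forward g hM1 e2 he2ne (by simp [he2])
    simpa using this
  have hB1 : g e2 1 = 0 := by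
    have := forward g hL4 e2 he2ne (by simp [he2])
    simpa using this
  -- v3 = e0 + e2
  have hv3ne : e0 + e2 ≠ 0 := fun h => by simpa [he0, he2] using congrFun h 0
  have h3 := forward g hM2 (e0 + e2) hv3ne (by simp [he0, he2])
  simp only [map_add] at h3
  have hAB : g e0 0 = g e2 2 := by
    have := h3
    simp [Pi.add_apply, hA2, hB0] at this
    linear_combination this
  -- v4 = -(γ⁺+1) • e0 + e2
  set c : ℂ := (γplus : ℂ) with hc
  have hv4ne : (-(c + 1)) • e0 + e2 ≠ 0 := fun h => by
    simpa [he0, he2] using congrFun h 2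
  have h4 := forward g hM3 ((-(c + 1)) • e0 + e2) hv4ne (by simp [he0, he2])
  simp only [map_add, map_smul] at h4
  have hkey : (-(c + 1)) * g e0 0 + ((γminus : ℂ) + 1) * g e2 2 = 0 := by
    have := h4
    simp [Pi.add_apply, Pi.smul_apply, smul_eq_mul, hA2, hB0] at this
    linear_combination this
  have hA0ne : g e0 0 ≠ 0 := by
    intro h0
    apply he0ne
    have hz : g e0 = 0 := by
      funext i
      fin_cases i <;> simp [h0, hA1, hA2]
    have := g.injective (by simpa using hz : g e0 = g 0)
    exact this
  have hcc : (γminus : ℂ) = c := by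
    rw [hAB] at hkey
    have : ((γminus : ℂ) - c) * g e2 2 = 0 := by linear_combination hkey
    rcases mul_eq_zero.mp this with h | h
    · exact sub_eq_zero.mp h
    · exact absurd h (by rwa [← hAB])
  rw [hc] at hcc
  have : γminus = γplus := by exact_mod_cast hcc
  have h5 : Real.sqrt 5 = 0 := by
    have := this
    unfold γminus γplus at this
    linarith
  have : (0:ℝ) < Real.sqrt 5 := Real.sqrt_pos.mpr (by norm_num)
  linarith [h5]
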